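/- Let ψ be a twice continuously differentiable real-valued function and v a continuously differentiable vector field on an open subset of ℝ³. Then the pointwise identity −(v·∇ψ) Δψ = −∇·((∇ψ ⊗ ∇ψ)·v) + (∇ψ ⊗ ∇ψ) : ∇v + v·∇(|∇ψ|²/2) holds, where Δ is the Laplacian, (∇ψ ⊗ ∇ψ)_{ij} = ∂_iψ ∂_jψ, ((∇ψ⊗∇ψ)·v)_i = Σ_j ∂_iψ ∂_jψ v_j, and (∇ψ⊗∇ψ):∇v = Σ_{i,j} ∂_iψ ∂_jψ ∂_i v_j. -/

import Mathlib

noncomputable section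
open scoped BigOperators

/-- `i`-th spatial partial derivative of a scalar field on `ℝ³`. -/
def pd3 (i : Fin 3) (f : (Fin 3 → ℝ) → ℝ) (x : Fin 3 → ℝ) : ℝ :=
  fderiv ℝ f x (Pi.single i 1)

/-- Spatial gradient. -/
def grad3 (f : (Fin 3 → ℝ) → ℝ) (x : Fin 3 → ℝ) : Fin 3 → ℝ := fun i => pd3 i f x

/-- Euclidean dot product on `ℝ³`. -/
def dot3 (a b : Fin 3 → ℝ) : ℝ := ∑ i, a i * b i

/-- Divergence of a vector field on `ℝ³`. -/
def div3 (u : (Fin 3 → ℝ) → Fin 3 → ℝ) (x : Fin 3 → ℝ) : ℝ :=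
  ∑ i, pd3 i (fun y => u y i) x

/-- Laplacian of a scalar field on `ℝ³`. -/
def lap3 (f : (Fin 3 → ℝ) → ℝ) (x : Fin 3 → ℝ) : ℝ :=
  div3 (fun y => grad3 f y) x

/-- Product rule for `pd3`. -/
lemma pd3_mul {f g : (Fin 3 → ℝ) → ℝ} {x : Fin 3 → ℝ} (i : Fin 3)
    (hf : DifferentiableAt ℝ f x) (hg : DifferentiableAt ℝ g x) :
    pd3 i (fun y => f y * g y) x = pd3 i f x * g x + f x * pd3 i g x := by
  unfold pd3
  rw [fderiv_fun_mul hf hg]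
  simp
  ring

/-- Sum rule for `pd3`. -/
lemma pd3_sum {F : Fin 3 → (Fin 3 → ℝ) → ℝ} {x : Fin 3 → ℝ} (i : Fin 3)
    (hF : ∀ j, DifferentiableAt ℝ (F j) x) :
    pd3 i (fun y => ∑ j, F j y) x = ∑ j, pd3 i (F j) x := by
  unfold pd3
  rw [fderiv_fun_sum (fun j _ => hF j)]
  simp

/-- Division by the constant `2` commutes with `pd3`. -/
lemma pd3_div2 {f : (Fin 3 → ℝ) → ℝ} {x : Fin 3 → ℝ} (i : Fin 3)
    (hf : DifferentiableAt ℝ f x) :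
    pd3 i (fun y => f y / 2) x = pd3 i f x / 2 := by
  unfold pd3
  simp only [div_eq_mul_inv]
  rw [fderiv_mul_const hf]
  simp
  ring

/-- **Capillary-stress identity for the transported Laplacian term.**
Pointwise, `−(v·∇ψ) Δψ = −∇·((∇ψ⊗∇ψ)·v) + (∇ψ⊗∇ψ) : ∇v + v·∇(|∇ψ|²/2)`. -/
theorem transported_laplacian_identity
    (U : Set (Fin 3 → ℝ)) (hU : IsOpen U)
    (ψ : (Fin 3 → ℝ) → ℝ) (v : (Fin 3 → ℝ) → Fin 3 → ℝ)
    (hψ : ContDiffOn ℝ 2 ψ U)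
    (hv : ∀ j, ContDiffOn ℝ 1 (fun x => v x j) U) :
    ∀ x ∈ U,
      -(dot3 (v x) (grad3 ψ x)) * lap3 ψ x
        = -div3 (fun y i => pd3 i ψ y * (∑ j, pd3 j ψ y * v y j)) x
          + (∑ i, ∑ j, pd3 i ψ x * pd3 j ψ x * pd3 i (fun y => v y j) x)
          + dot3 (v x) (grad3 (fun y => dot3 (grad3 ψ y) (grad3 ψ y) / 2) x) := by
  intro x hx
  have hmem : U ∈ nhds x := hU.mem_nhds hx
  have hψx : ContDiffAt ℝ 2 ψ x := hψ.contDiffAt hmem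
  have hvx : ∀ j, DifferentiableAt ℝ (fun y => v y j) x := fun j =>
    ((hv j).contDiffAt hmem).differentiableAt one_ne_zero
  have hf1 : ContDiffAt ℝ 1 (fderiv ℝ ψ) x := hψx.fderiv_right (m := 1) (by norm_num)
  have hgd : ∀ j, DifferentiableAt ℝ (fun y => pd3 j ψ y) x := fun j =>
    (hf1.differentiableAt one_ne_zero).clm_apply (differentiableAt_const _)
  have hfd : HasFDerivAt (fderiv ℝ ψ) (fderiv ℝ (fderiv ℝ ψ) x) x :=
    (hf1.differentiableAt one_ne_zero).hasFDerivAt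
  have hpd : ∀ i j : Fin 3, pd3 i (fun y => pd3 j ψ y) x
      = fderiv ℝ (fderiv ℝ ψ) x (Pi.single i 1) (Pi.single j 1) := by
    intro i j
    unfold pd3
    have h1' := (ContinuousLinearMap.apply ℝ ℝ ((Pi.single j 1 : Fin 3 → ℝ))).hasFDerivAt.comp x hfd
    have h1 : HasFDerivAt (fun y => fderiv ℝ ψ y (Pi.single j 1))
        ((ContinuousLinearMap.apply ℝ ℝ ((Pi.single j 1 : Fin 3 → ℝ))).comp
          (fderiv ℝ (fderiv ℝ ψ) x)) x := h1'
    rw [h1.fderiv]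
    rfl
  have hsymm : ∀ i j : Fin 3,
      pd3 i (fun y => pd3 j ψ y) x = pd3 j (fun y => pd3 i ψ y) x := by
    intro i j
    rw [hpd, hpd]
    exact hψx.isSymmSndFDerivAt (by simp [minSmoothness_of_isRCLikeNormedField]) _ _
  have hSd : DifferentiableAt ℝ (fun y => ∑ j, pd3 j ψ y * v y j) x :=
    DifferentiableAt.fun_sum fun j _ => (hgd j).mul (hvx j)
  have hSpd : ∀ i : Fin 3, pd3 i (fun y => ∑ j, pd3 j ψ y * v y j) x
      = ∑ j, (pd3 i (fun y => pd3 j ψ y) x * v x j + pd3 j ψ x * pd3 i (fun y => v y j) x) := by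
    intro i
    rw [pd3_sum i (fun j => (hgd j).fun_mul (hvx j))]
    exact Finset.sum_congr rfl fun j _ => pd3_mul i (hgd j) (hvx j)
  have hdiv : ∀ i : Fin 3,
      pd3 i (fun y => pd3 i ψ y * (∑ j, pd3 j ψ y * v y j)) x
      = pd3 i (fun y => pd3 i ψ y) x * (∑ j, pd3 j ψ x * v x j)
        + pd3 i ψ x * (∑ j, (pd3 i (fun y => pd3 j ψ y) x * v x j
            + pd3 j ψ x * pd3 i (fun y => v y j) x)) := by
    intro i
    rw [pd3_mul i (hgd i) hSd, hSpd i]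
  have hen : ∀ j : Fin 3,
      pd3 j (fun y => (∑ k, pd3 k ψ y * pd3 k ψ y) / 2) x
      = (∑ k, (pd3 j (fun y => pd3 k ψ y) x * pd3 k ψ x
          + pd3 k ψ x * pd3 j (fun y => pd3 k ψ y) x)) / 2 := by
    intro j
    rw [pd3_div2 j (DifferentiableAt.fun_sum fun k _ => (hgd k).fun_mul (hgd k)),
      pd3_sum j (fun k => (hgd k).fun_mul (hgd k))]
    congr 1
    exact Finset.sum_congr rfl fun k _ => pd3_mul j (hgd k) (hgd k)
  simp only [dot3, grad3, lap3, div3]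
  simp only [hdiv, hen]
  simp only [Fin.sum_univ_three]
  rw [hsymm 1 0, hsymm 2 0, hsymm 2 1]
  ring
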